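/- Let Φ be the master function of a weighted essential arrangement 𝒜 in ℂ^k with nonzero weights, and let E = Σ_m f^m ⊗ F_m ∈ ℂ(t)_U ⊗ 𝓕^k(𝒜) be the canonical element (where (F_m) is a basis of 𝓕^k(𝒜) with dual basis H^m = f^m dt_1∧⋯∧dt_k of OS^k(𝒜)). Then the image [E] of E in A_Φ ⊗ 𝓕^k(𝒜) lies in A_Φ ⊗ Sing 𝓕^k(𝒜), where A_Φ = ℂ(t)_U/I_Φ is the algebra of functions on the critical set. -/
import Mathlib


open MvPolynomial

/-- **The canonical element projects into `A_Φ ⊗ Sing 𝓕^k`.**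
For the weighted essential arrangement `H_j = {g_j(t)+z_j = 0}` in `ℂ^{k+1}` with nonzero
weights `a_j`, the algebra `ℂ(t)_U` of rational functions regular on the complement is
presented as `ℂ[t, y_1,…,y_n]/(y_j f_j − 1)` with `y_j = 1/f_j`, and
`A_Φ = ℂ(t)_U / I_Φ` where `I_Φ` is generated by `∂Φ/∂t_i = Σ_j a_j g_j(e_i) y_j`.
The canonical element `E` pairs with `(H_{i₀},…,H_{i_k}) ∈ OS^{k+1}` to the coefficient
function `det(g_{i_r}(e_s))·∏_r y_{i_r}`.  The statement `[E] ∈ A_Φ ⊗ Sing 𝓕^{k+1}` says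
exactly that the pairing of `E` with every generator `ν(a)·(H_{j₁},…,H_{j_k}) =
Σ_j a_j (H_j,H_{j₁},…,H_{j_k})` of `ν(a)·OS^k` lies in `I_Φ`, i.e. belongs to the ideal
generated by both families of relations in the polynomial presentation. -/
theorem canonical_element_lies_in_singular_subspace
    (k n : ℕ)
    (g : Fin n → ((Fin (k+1) → ℂ) →ₗ[ℂ] ℂ)) (z a : Fin n → ℂ)
    (ha : ∀ j, a j ≠ 0) (hg : ∀ j, g j ≠ 0)
    (hess : ∃ js : Fin (k+1) → Fin n, LinearIndependent ℂ (g ∘ js)) :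
    ∀ js : Fin k → Fin n,
      (∑ j : Fin n,
        C (a j * (Matrix.of fun i i' : Fin (k+1) =>
            g ((Fin.cons j js : Fin (k+1) → Fin n) i) (Pi.single i' 1)).det) *
          ∏ i : Fin (k+1), X (Sum.inr ((Fin.cons j js : Fin (k+1) → Fin n) i)) :
        MvPolynomial (Fin (k+1) ⊕ Fin n) ℂ)
      ∈ Ideal.span (
        (Set.range fun j' : Fin n =>
          (X (Sum.inr j') *
            (C (z j') + ∑ i : Fin (k+1), C (g j' (Pi.single i 1)) * X (Sum.inl i)) - 1 :
              MvPolynomial (Fin (k+1) ⊕ Fin n) ℂ)) ∪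
        (Set.range fun i : Fin (k+1) =>
          (∑ j' : Fin n, C (a j' * g j' (Pi.single i 1)) * X (Sum.inr j') :
              MvPolynomial (Fin (k+1) ⊕ Fin n) ℂ))) := by
  intro js
  -- the minor obtained by deleting the first row and column `s`
  set m : Fin (k+1) → ℂ := fun s =>
    (Matrix.of fun r s' : Fin k => g (js r) (Pi.single (s.succAbove s') 1)).det with hm
  -- the common product of the `y`-variables
  set D : MvPolynomial (Fin (k+1) ⊕ Fin n) ℂ := ∏ r : Fin k, X (Sum.inr (js r)) with hD
  have key :
      (∑ j : Fin n,
        C (a j * (Matrix.of fun i i' : Fin (k+1) =>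
            g ((Fin.cons j js : Fin (k+1) → Fin n) i) (Pi.single i' 1)).det) *
          ∏ i : Fin (k+1), X (Sum.inr ((Fin.cons j js : Fin (k+1) → Fin n) i)) :
        MvPolynomial (Fin (k+1) ⊕ Fin n) ℂ)
      = ∑ s : Fin (k+1), (C ((-1)^(s:ℕ) * m s) * D) *
          (∑ j' : Fin n, C (a j' * g j' (Pi.single s 1)) * X (Sum.inr j')) := by
    have hdet : ∀ j : Fin n,
        (Matrix.of fun i i' : Fin (k+1) =>
            g ((Fin.cons j js : Fin (k+1) → Fin n) i) (Pi.single i' 1)).det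
        = ∑ s : Fin (k+1), (-1)^(s:ℕ) * g j (Pi.single s 1) * m s := by
      intro j
      rw [Matrix.det_succ_row_zero]
      refine Finset.sum_congr rfl fun s _ => ?_
      have h1 : (Matrix.of fun i i' : Fin (k+1) =>
            g ((Fin.cons j js : Fin (k+1) → Fin n) i) (Pi.single i' 1)).submatrix
              Fin.succ s.succAbove
          = Matrix.of fun r s' : Fin k => g (js r) (Pi.single (s.succAbove s') 1) := by
        ext r s'
        simp [Fin.cons_succ]
      rw [h1]
      simp [hm]
    have hprod : ∀ j : Fin n,
        (∏ i : Fin (k+1), X (Sum.inr ((Fin.cons j js : Fin (k+1) → Fin n) i)) :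
          MvPolynomial (Fin (k+1) ⊕ Fin n) ℂ) = X (Sum.inr j) * D := by
      intro j
      rw [Fin.prod_univ_succ]
      simp [hD]
    calc (∑ j : Fin n,
        C (a j * (Matrix.of fun i i' : Fin (k+1) =>
            g ((Fin.cons j js : Fin (k+1) → Fin n) i) (Pi.single i' 1)).det) *
          ∏ i : Fin (k+1), X (Sum.inr ((Fin.cons j js : Fin (k+1) → Fin n) i)) :
        MvPolynomial (Fin (k+1) ⊕ Fin n) ℂ)
        = ∑ j : Fin n, ∑ s : Fin (k+1),
            C (a j * ((-1)^(s:ℕ) * g j (Pi.single s 1) * m s)) * (X (Sum.inr j) * D) := by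
          refine Finset.sum_congr rfl fun j _ => ?_
          rw [hdet j, hprod j, Finset.mul_sum, map_sum, Finset.sum_mul]
      _ = ∑ s : Fin (k+1), (C ((-1)^(s:ℕ) * m s) * D) *
            (∑ j' : Fin n, C (a j' * g j' (Pi.single s 1)) * X (Sum.inr j')) := by
          rw [Finset.sum_comm]
          refine Finset.sum_congr rfl fun s _ => ?_
          rw [Finset.mul_sum]
          refine Finset.sum_congr rfl fun j _ => ?_
          simp only [map_mul]
          ring
  rw [key]
  refine Ideal.sum_mem _ fun s _ => Ideal.mul_mem_left _ _ ?_
  exact Ideal.subset_span (Or.inr ⟨s, rfl⟩)
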